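/- Let λ be a partition of n, identify the boxes of 2λ with {1,…,2n} via the canonical tableau T (numbering consecutively along rows), and let S be the first pair-partition of [2n]. If (S₁,S₂) is a T-admissible couple of pair-partitions of [2n] with |L(S₁,S₂)| = n (i.e. every orbit of the subgroup generated by S₁ and S₂ has cardinality 2), then S₁ = S₂ = S. -/

import Mathlib

open scoped BigOperators

namespace ZonalPP

/-- A pair-partition of `[N]` (with `N` even), encoded as a fixed-point-free involution. -/
def IsPairPartition {N : ℕ} (s : Equiv.Perm (Fin N)) : Prop :=
  Function.Involutive s ∧ ∀ x, s x ≠ x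

noncomputable instance {G α : Type*} [Group G] [MulAction G α] [Finite α] :
    Fintype (MulAction.orbitRel.Quotient G α) :=
  Fintype.ofFinite _

/-- The loops of a couple of pair-partitions: orbits of the subgroup generated by `a, b`. -/
abbrev Loops {N : ℕ} (a b : Equiv.Perm (Fin N)) : Type :=
  MulAction.orbitRel.Quotient (Subgroup.closure ({a, b} : Set (Equiv.Perm (Fin N)))) (Fin N)

/-- The set of elements of a loop. -/
def loopSet {N : ℕ} {a b : Equiv.Perm (Fin N)} (q : Loops a b) : Set (Fin N) :=
  MulAction.orbitRel.Quotient.orbit q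

/-- Number of loops `|L(a,b)|`. -/
noncomputable def numLoops {N : ℕ} (a b : Equiv.Perm (Fin N)) : ℕ :=
  Nat.card (Loops a b)

/-- The type of a couple of pair-partitions: the multiset of halved loop sizes. -/
noncomputable def loopType {N : ℕ} (a b : Equiv.Perm (Fin N)) : Multiset ℕ :=
  (Finset.univ : Finset (Loops a b)).val.map fun q => Nat.card (loopSet q) / 2

/-- The multiset of cycle lengths (including fixed points) of a permutation. -/
noncomputable def cycleSizes {N : ℕ} (σ : Equiv.Perm (Fin N)) : Multiset ℕ :=
  (Finset.univ : Finset (MulAction.orbitRel.Quotient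
      (Subgroup.closure ({σ} : Set (Equiv.Perm (Fin N)))) (Fin N))).val.map
    fun q => Nat.card (MulAction.orbitRel.Quotient.orbit q)

/-- `z_μ = μ₁μ₂⋯ ∏ᵢ mᵢ(μ)!`. -/
def zMu {n : ℕ} (μ : n.Partition) : ℕ :=
  μ.parts.prod * ∏ i ∈ μ.parts.toFinset, (μ.parts.count i).factorial

/-- The first pair-partition `S`, pairing `2i` with `2i+1` (0-indexed). -/
def firstPP (n : ℕ) : Equiv.Perm (Fin (2 * n)) where
  toFun x := ⟨2 * ((x : ℕ) / 2) + (1 - (x : ℕ) % 2), by have := x.isLt; omega⟩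
  invFun x := ⟨2 * ((x : ℕ) / 2) + (1 - (x : ℕ) % 2), by have := x.isLt; omega⟩
  left_inv x := by
    apply Fin.ext
    have := x.isLt
    simp only [Fin.val_mk]
    omega
  right_inv x := by
    apply Fin.ext
    have := x.isLt
    simp only [Fin.val_mk]
    omega

/-- Row lengths of a partition (weakly decreasing), 0-indexed; `rowLen lam r = λ_{r+1}`. -/
def rowLen {n : ℕ} (lam : n.Partition) (r : ℕ) : ℕ :=
  ((lam.parts.sort (· ≤ ·)).reverse).getD r 0

/-- `f` maps into the boxes of `2λ`; a box is a pair `(row, column)`, both 0-indexed. -/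
def InBoxes2 {M n : ℕ} (lam : n.Partition) (f : Fin M → ℕ × ℕ) : Prop :=
  ∀ l, (f l).2 < 2 * rowLen lam (f l).1

/-- Condition (P0): `f l` and `f (S₀ l)` are neighbors in `2λ`. -/
def P0cond {M : ℕ} (S0 : Equiv.Perm (Fin M)) (f : Fin M → ℕ × ℕ) : Prop :=
  ∀ l, (f (S0 l)).1 = (f l).1 ∧ (f (S0 l)).2 / 2 = (f l).2 / 2 ∧ (f (S0 l)).2 ≠ (f l).2

/-- Condition (P1): `f l` and `f (S₀ (S₁ l))` are in the same column. -/
def P1cond {M : ℕ} (S0 S1 : Equiv.Perm (Fin M)) (f : Fin M → ℕ × ℕ) : Prop :=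
  ∀ l, (f (S0 (S1 l))).2 = (f l).2

/-- Condition (P2): `f l` and `f (S₂ l)` are in the same row. -/
def P2cond {M : ℕ} (S2 : Equiv.Perm (Fin M)) (f : Fin M → ℕ × ℕ) : Prop :=
  ∀ l, (f (S2 l)).1 = (f l).1

/-- `N²_{S₀,S₁,S₂}(λ)`: the number of functions from `[2k]` to the boxes of `2λ`
satisfying (P0), (P1), (P2). -/
noncomputable def N2 {k n : ℕ} (S0 S1 S2 : Equiv.Perm (Fin (2*k))) (lam : n.Partition) : ℕ :=
  Nat.card {f : Fin (2*k) → ℕ × ℕ //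
    InBoxes2 lam f ∧ P0cond S0 f ∧ P1cond S0 S1 f ∧ P2cond S2 f}

/-- `N̂²_{S₀,S₁,S₂}(λ)`: the number of injective such functions. -/
noncomputable def Nhat2 {k n : ℕ} (S0 S1 S2 : Equiv.Perm (Fin (2*k))) (lam : n.Partition) : ℕ :=
  Nat.card {f : Fin (2*k) → ℕ × ℕ //
    Function.Injective f ∧ InBoxes2 lam f ∧ P0cond S0 f ∧ P1cond S0 S1 f ∧ P2cond S2 f}

/-- `N¹_{S₀,S₁,S₂}(λ)`: the number of functions from `[2k]` to the boxes of `λ` such that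
`f∘S₀ = f`, `f(S₁ l)` is in the same column as `f l`, and `f(S₂ l)` is in the same row. -/
noncomputable def N1 {k n : ℕ} (S0 S1 S2 : Equiv.Perm (Fin (2*k))) (lam : n.Partition) : ℕ :=
  Nat.card {f : Fin (2*k) → ℕ × ℕ //
    (∀ l, (f l).2 < rowLen lam (f l).1) ∧ (∀ l, f (S0 l) = f l) ∧
    (∀ l, (f (S1 l)).2 = (f l).2) ∧ (∀ l, (f (S2 l)).1 = (f l).1)}

/-- `T` is the pair-partition `S̃` of `[2n]` obtained from the pair-partition `S` of `[2k]`
by adjoining the pairs `{2k+1, 2k+2}, …, {2n-1, 2n}` (1-indexed). -/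
def ExtendsPP {k n : ℕ} (S : Equiv.Perm (Fin (2*k))) (T : Equiv.Perm (Fin (2*n))) : Prop :=
  (∀ (x : Fin (2*k)) (y : Fin (2*n)), (x : ℕ) = (y : ℕ) → ((T y : ℕ) = (S x : ℕ))) ∧
  (∀ y : Fin (2*n), 2*k ≤ (y : ℕ) → ((T y : ℕ) = 2 * ((y : ℕ)/2) + (1 - (y : ℕ) % 2)))

end ZonalPP

namespace ZonalPP


lemma firstPP_val {n : ℕ} (t : Fin (2*n)) :
    ((firstPP n t : Fin (2*n)) : ℕ) = 2 * ((t : ℕ) / 2) + (1 - (t : ℕ) % 2) := rfl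

lemma firstPP_invol {n : ℕ} (x : Fin (2*n)) : firstPP n (firstPP n x) = x :=
  (firstPP n).left_inv x

lemma off_even {n : ℕ} (lam : Nat.Partition n) (r : ℕ) :
    (∑ i ∈ Finset.range r, 2 * rowLen lam i) % 2 = 0 := by
  rw [← Finset.mul_sum]; omega

lemma uniq_pos {n : ℕ} (lam : Nat.Partition n) {r c r' c' : ℕ}
    (h1 : c < 2 * rowLen lam r) (h2 : c' < 2 * rowLen lam r')
    (he : (∑ i ∈ Finset.range r, 2 * rowLen lam i) + c =
      (∑ i ∈ Finset.range r', 2 * rowLen lam i) + c') :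
    r = r' ∧ c = c' := by
  rcases lt_trichotomy r r' with h | h | h
  · exfalso
    have hm : (∑ i ∈ Finset.range (r+1), 2 * rowLen lam i) ≤
        ∑ i ∈ Finset.range r', 2 * rowLen lam i :=
      Finset.sum_le_sum_of_subset (Finset.range_subset_range.2 h)
    rw [Finset.sum_range_succ] at hm
    omega
  · subst h; omega
  · exfalso
    have hm : (∑ i ∈ Finset.range (r'+1), 2 * rowLen lam i) ≤
        ∑ i ∈ Finset.range r, 2 * rowLen lam i :=
      Finset.sum_le_sum_of_subset (Finset.range_subset_range.2 h)
    rw [Finset.sum_range_succ] at hm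
    omega

/-- If `(S₁,S₂)` is a `T`-admissible couple of pair-partitions of `[2n]`
(w.r.t. the canonical numbering of the boxes of `2λ`, given by the coordinate functions
`row, col`) with `n` loops, then `S₁ = S₂ = S`, the first pair-partition. -/
theorem statement6 {n : ℕ} (lam : Nat.Partition n) (row col : Fin (2*n) → ℕ)
    (hT : ∀ t, col t < 2 * rowLen lam (row t) ∧
      (∑ r ∈ Finset.range (row t), 2 * rowLen lam r) + col t = (t : ℕ))
    (S1 S2 : Equiv.Perm (Fin (2*n)))
    (h1 : IsPairPartition S1) (h2 : IsPairPartition S2)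
    (hcol : ∀ t, col ((firstPP n * S1) t) = col t)
    (hrow : ∀ t, row (S2 t) = row t)
    (hloops : numLoops S1 S2 = n) :
    S1 = firstPP n ∧ S2 = firstPP n := by
  classical
  set S := firstPP n with hS
  set G := Subgroup.closure ({S1, S2} : Set (Equiv.Perm (Fin (2*n)))) with hG
  -- Step 1: all orbits have size exactly 2, hence S2 = S1.
  have hS1G : S1 ∈ G := Subgroup.subset_closure (Set.mem_insert _ _)
  have hS2G : S2 ∈ G := Subgroup.subset_closure (Set.mem_insert_of_mem _ rfl)
  have horb : ∀ (σ : Equiv.Perm (Fin (2*n))) (hσ : σ ∈ G) (x : Fin (2*n)),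
      σ x ∈ MulAction.orbit G x := fun σ hσ x => ⟨⟨σ, hσ⟩, rfl⟩
  have horbit_mk : ∀ x : Fin (2*n),
      (MulAction.orbitRel.Quotient.orbit (Quotient.mk'' x : Loops S1 S2)) =
        MulAction.orbit G x := fun x =>
    MulAction.orbitRel.Quotient.orbit_mk x
  have hsum : ∑ q : Loops S1 S2,
      Nat.card (MulAction.orbitRel.Quotient.orbit q) = 2 * n := by
    haveI : ∀ q : Loops S1 S2, Fintype (MulAction.orbitRel.Quotient.orbit q) :=
      fun q => Fintype.ofFinite _
    have e := MulAction.selfEquivSigmaOrbits' G (Fin (2*n))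
    have : Fintype.card (Fin (2*n)) =
        Fintype.card (Σ q : Loops S1 S2, MulAction.orbitRel.Quotient.orbit q) :=
      Fintype.card_congr e
    rw [Fintype.card_sigma, Fintype.card_fin] at this
    calc ∑ q : Loops S1 S2, Nat.card (MulAction.orbitRel.Quotient.orbit q)
        = ∑ q : Loops S1 S2, Fintype.card (MulAction.orbitRel.Quotient.orbit q) :=
          Finset.sum_congr rfl fun q _ => Nat.card_eq_fintype_card
      _ = 2 * n := this.symm
  have hge : ∀ q : Loops S1 S2, 2 ≤ Nat.card (MulAction.orbitRel.Quotient.orbit q) := by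
    intro q
    refine Quotient.inductionOn' q ?_
    intro x
    · rw [horbit_mk x, Nat.card_coe_set_eq]
      have hsub : ({x, S1 x} : Set (Fin (2*n))) ⊆ MulAction.orbit G x := by
        intro y hy
        rcases hy with h | h
        · rw [h]; exact MulAction.mem_orbit_self x
        · rw [h]; exact horb S1 hS1G x
      calc 2 = ({x, S1 x} : Set (Fin (2*n))).ncard := (Set.ncard_pair (h1.2 x).symm).symm
        _ ≤ _ := Set.ncard_le_ncard hsub (Set.toFinite _)
  have hcard : Fintype.card (Loops S1 S2) = n := by
    have := hloops
    rwa [numLoops, Nat.card_eq_fintype_card] at this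
  have heq2 : ∀ q : Loops S1 S2, Nat.card (MulAction.orbitRel.Quotient.orbit q) = 2 := by
    intro q
    by_contra hne
    have hlt : ∀ i ∈ (Finset.univ : Finset (Loops S1 S2)),
        (2 : ℕ) ≤ Nat.card (MulAction.orbitRel.Quotient.orbit i) := fun i _ => hge i
    have : (∑ _q : Loops S1 S2, 2) <
        ∑ q : Loops S1 S2, Nat.card (MulAction.orbitRel.Quotient.orbit q) :=
      Finset.sum_lt_sum hlt ⟨q, Finset.mem_univ q, lt_of_le_of_ne (hge q) (Ne.symm hne)⟩
    rw [Finset.sum_const, Finset.card_univ, hcard, smul_eq_mul, hsum] at this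
    omega
  have hS21 : ∀ x, S2 x = S1 x := by
    intro x
    have h2card : (MulAction.orbit G x).ncard = 2 := by
      have := heq2 (Quotient.mk'' x)
      rwa [horbit_mk x, Nat.card_coe_set_eq] at this
    have hsub : ({x, S1 x} : Set (Fin (2*n))) ⊆ MulAction.orbit G x := by
      intro y hy
      rcases hy with h | h
      · rw [h]; exact MulAction.mem_orbit_self x
      · rw [h]; exact horb S1 hS1G x
    have hpair : ({x, S1 x} : Set (Fin (2*n))).ncard = 2 := Set.ncard_pair (h1.2 x).symm
    have heqset : ({x, S1 x} : Set (Fin (2*n))) = MulAction.orbit G x :=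
      Set.eq_of_subset_of_ncard_le hsub (by rw [h2card, hpair]) (Set.toFinite _)
    have hmem : S2 x ∈ ({x, S1 x} : Set (Fin (2*n))) := by
      rw [heqset]; exact horb S2 hS2G x
    rcases hmem with h | h
    · exact absurd h (h2.2 x)
    · exact h
  -- Step 2: S = firstPP preserves rows and uniqueness of (row, col).
  have hrowS : ∀ t : Fin (2*n), row (S t) = row t ∧
      col (S t) = 2 * (col t / 2) + (1 - col t % 2) := by
    intro t
    obtain ⟨hc, he⟩ := hT t
    obtain ⟨hc', he'⟩ := hT (S t)
    have hev := off_even lam (row t)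
    have hval : ((S t : Fin (2*n)) : ℕ) = 2 * ((t : ℕ) / 2) + (1 - (t : ℕ) % 2) := rfl
    have hlt : 2 * (col t / 2) + (1 - col t % 2) < 2 * rowLen lam (row t) := by omega
    have hpos : (∑ i ∈ Finset.range (row t), 2 * rowLen lam i) +
        (2 * (col t / 2) + (1 - col t % 2)) = ((S t : Fin (2*n)) : ℕ) := by
      rw [hval]; omega
    have := uniq_pos lam hc' hlt (by rw [he', hpos])
    exact ⟨this.1, this.2⟩
  -- Step 3: conclude S1 = S.
  have hmain : ∀ t, S1 t = S t := by
    intro t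
    have hr1 : row (S1 t) = row t := by rw [← hS21 t]; exact hrow t
    have hcS : col (S (S1 t)) = col t := hcol t
    have hrS : row (S (S1 t)) = row t := by rw [(hrowS (S1 t)).1, hr1]
    obtain ⟨hc, he⟩ := hT t
    obtain ⟨hc', he'⟩ := hT (S (S1 t))
    rw [hrS, hcS] at hc' he'
    have hvv : ((S (S1 t) : Fin (2*n)) : ℕ) = (t : ℕ) := by omega
    have hst : S (S1 t) = t := Fin.ext hvv
    calc S1 t = S (S (S1 t)) := (firstPP_invol _).symm
      _ = S t := congrArg S hst
  have hS1 : S1 = firstPP n := Equiv.ext fun t => hmain t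
  exact ⟨hS1, Equiv.ext fun t => by rw [hS21 t, hmain t]⟩


end ZonalPP
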